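/- For real sequences: if a_n ≥ 0, a ≥ 0, p ≥ 2, and (a_n^{p−1} − a^{p−1})(a_n − a) → 0, then a_n → a. -/

import Mathlib

open Filter

theorem seq_power_convergence (p : ℝ) (hp : 2 ≤ p) (a : ℕ → ℝ) (b : ℝ)
    (ha : ∀ n, 0 ≤ a n) (hb : 0 ≤ b)
    (h : Tendsto (fun n => (a n ^ (p - 1) - b ^ (p - 1)) * (a n - b)) atTop (nhds 0)) :
    Tendsto a atTop (nhds b) := by
  set q := p - 1 with hq
  have hq1 : 1 ≤ q := by simp [hq]; linarith
  have hp0 : (0:ℝ) < p := by linarith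
  have key : ∀ x y : ℝ, 0 ≤ x → 0 ≤ y → |x - y| ^ p ≤ (x ^ q - y ^ q) * (x - y) := by
    have main : ∀ x y : ℝ, 0 ≤ y → y ≤ x → |x - y| ^ p ≤ (x ^ q - y ^ q) * (x - y) := by
      intro x y hy hle
      have hxy : 0 ≤ x - y := sub_nonneg.2 hle
      have h1 : (x - y) ^ q + y ^ q ≤ x ^ q := by
        have h2 := NNReal.coe_le_coe.2 (NNReal.add_rpow_le_rpow_add (Real.toNNReal (x - y)) (Real.toNNReal y) hq1)
        rw [NNReal.coe_add, NNReal.coe_rpow, NNReal.coe_rpow, NNReal.coe_rpow,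
          NNReal.coe_add, Real.coe_toNNReal _ hxy, Real.coe_toNNReal _ hy, sub_add_cancel] at h2
        exact h2
      have habs : |x - y| = x - y := abs_of_nonneg hxy
      have hsplit : (x - y) ^ p = (x - y) ^ q * (x - y) := by
        have : (x - y) ^ (q + 1) = (x - y) ^ q * (x - y) ^ (1:ℝ) :=
          Real.rpow_add' hxy (by simp [hq]; linarith)
        simpa [hq, Real.rpow_one] using this
      rw [habs, hsplit]
      exact mul_le_mul_of_nonneg_right (by linarith) hxy
    intro x y hx hy
    rcases le_total y x with hle | hle
    · exact main x y hy hle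
    · have := main y x hx hle
      calc |x - y| ^ p = |y - x| ^ p := by rw [abs_sub_comm]
        _ ≤ (y ^ q - x ^ q) * (y - x) := this
        _ = (x ^ q - y ^ q) * (x - y) := by ring
  have hsq : Tendsto (fun n => |a n - b| ^ p) atTop (nhds 0) := by
    refine squeeze_zero (fun n => Real.rpow_nonneg (abs_nonneg _) _)
      (fun n => key (a n) b (ha n) hb) h
  have habst : Tendsto (fun n => |a n - b|) atTop (nhds 0) := by
    have := hsq.rpow_const (p := p⁻¹) (Or.inr (by positivity))
    have h0 : (0:ℝ) ^ p⁻¹ = 0 := Real.zero_rpow (by positivity)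
    rw [h0] at this
    refine this.congr fun n => ?_
    exact Real.rpow_rpow_inv (abs_nonneg _) (ne_of_gt hp0)
  have : Tendsto (fun n => a n - b) atTop (nhds 0) :=
    tendsto_zero_iff_abs_tendsto_zero _ |>.2 habst
  simpa using this.add_const b
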